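/- Let Φ be a monotone NAE-3-SAT instance in which each variable occurs in exactly four clauses, and let G(Φ)=(V,E) be the graph constructed from Φ. Then |V| = 16n + 3m + 1, |E| = 32n + 6m, and the edge set of G(Φ) can be partitioned into two spanning trees. -/

import Mathlib

namespace PackingRainbowStmt3

/-- An edge of the multigraph connects via set `F`: there is an edge in `F` with
endpoints `a` and `b`. -/
def Step {V E : Type*} (ends : E → Sym2 V) (F : Set E) (a b : V) : Prop :=
  ∃ e ∈ F, ends e = s(a, b)

/-- The edge set `F` makes the multigraph with endpoint map `ends` connected
(any two vertices are joined by a walk using edges of `F`). -/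
def Connects {V E : Type*} (ends : E → Sym2 V) (F : Set E) : Prop :=
  ∀ a b : V, Relation.ReflTransGen (Step ends F) a b

/-- `F` is a spanning tree: it connects all vertices, minimally so. -/
def IsSpanningTree {V E : Type*} (ends : E → Sym2 V) (F : Set E) : Prop :=
  Connects ends F ∧ ∀ e ∈ F, ¬ Connects ends (F \ {e})

/-- `F` is rainbow: each color class contains at most one edge of `F`. -/
def Rainbow {E C : Type*} (color : E → C) (F : Set E) : Prop :=
  ∀ e ∈ F, ∀ f ∈ F, color e = color f → e = f

/-- A monotone NAE-3-SAT instance with `n` variables and `m` clauses in which every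
clause contains three distinct variables and every variable occurs in exactly four
clauses.  `occ (j, q) = (i, p)` means that the `q`-th variable of clause `j` is the
variable `i`, and that this is the `p`-th occurrence of `i` in the order of the
clauses.  Bijectivity of `occ` encodes that every variable occurs exactly four times. -/
structure NAE4Instance (n m : ℕ) where
  occ : (Fin m × Fin 3) ≃ (Fin n × Fin 4)
  distinct : ∀ j : Fin m, Function.Injective fun q : Fin 3 => (occ (j, q)).1
  mono : ∀ j q j' q', (occ (j, q)).1 = (occ (j', q')).1 →
    Prod.Lex (· < ·) (· < ·) (j, q) (j', q') → (occ (j, q)).2 < (occ (j', q')).2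

/-- `Φ` has a not-all-equal truth assignment: every clause contains
at least one true and at least one false variable. -/
def HasNAEAssignment {n m : ℕ} (Φ : NAE4Instance n m) : Prop :=
  ∃ a : Fin n → Bool, ∀ j : Fin m,
    (∃ q : Fin 3, a (Φ.occ (j, q)).1 = true) ∧ (∃ q : Fin 3, a (Φ.occ (j, q)).1 = false)

/-- Vertices of the graph `G(Φ)`: for every variable `i` and `p ∈ [4]` the four
vertices `u i p, v i p, w i p, z i p` of a `K₄`; for every clause `j` the triangle
vertices `c j q`; and the extra vertex `r`. -/
inductive Vtx (n m : ℕ) where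
  | u (i : Fin n) (p : Fin 4)
  | v (i : Fin n) (p : Fin 4)
  | w (i : Fin n) (p : Fin 4)
  | z (i : Fin n) (p : Fin 4)
  | c (j : Fin m) (q : Fin 3)
  | r
  deriving DecidableEq, Fintype

/-- Edges of `G(Φ)`: the six edges of each `K₄`; the triangle edges
`c j q — c j (q+1)`; the edges `z^{i_q}_ℓ — c j q`; and two parallel
edges between `r` and each `u i p`. -/
inductive Edg (n m : ℕ) where
  | uv (i : Fin n) (p : Fin 4)
  | uw (i : Fin n) (p : Fin 4)
  | uz (i : Fin n) (p : Fin 4)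
  | vw (i : Fin n) (p : Fin 4)
  | vz (i : Fin n) (p : Fin 4)
  | wz (i : Fin n) (p : Fin 4)
  | tri (j : Fin m) (q : Fin 3)
  | zc (j : Fin m) (q : Fin 3)
  | ru (i : Fin n) (p : Fin 4) (b : Fin 2)
  deriving DecidableEq, Fintype

/-- The colors of the edge-coloring of `G(Φ)`. -/
inductive Col (n m : ℕ) where
  | rpar (i : Fin n) (p : Fin 4)
  | ca (i : Fin n) (p : Fin 4)
  | cb (i : Fin n) (p : Fin 4)
  | cc (i : Fin n) (p : Fin 4)
  | cd (i : Fin n) (p : Fin 4)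
  deriving DecidableEq, Fintype

/-- Endpoints of the edges of `G(Φ)`. -/
def ends {n m : ℕ} (Φ : NAE4Instance n m) : Edg n m → Sym2 (Vtx n m)
  | .uv i p => s(.u i p, .v i p)
  | .uw i p => s(.u i p, .w i p)
  | .uz i p => s(.u i p, .z i p)
  | .vw i p => s(.v i p, .w i p)
  | .vz i p => s(.v i p, .z i p)
  | .wz i p => s(.w i p, .z i p)
  | .tri j q => s(.c j q, .c j (q + 1))
  | .zc j q => s(.z (Φ.occ (j, q)).1 (Φ.occ (j, q)).2, .c j q)
  | .ru i p _ => s(.r, .u i p)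

/-- The edge-coloring of `G(Φ)`: the two parallel edges at `r` to `u i p` form the
class `rpar i p`; the classes corresponding to variable `i` and `p ∈ [4]` are
`ca i p = {w^i_p z^i_p, z^i_p c^{j_p}_{q_p}}`, `cb i p = {v^i_p z^i_p, u^i_{p+1} v^i_{p+1}}`,
`cc i p = {u^i_p z^i_p, v^i_p w^i_p}` and `cd i p = {u^i_p w^i_p, c^{j_p}_{q_p} c^{j_p}_{q_p+1}}`,
where `c^{j_p}_{q_p}` is the triangle neighbor of `z^i_p`, i.e. `(j_p, q_p) = Φ.occ.symm (i, p)`. -/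
def color {n m : ℕ} (Φ : NAE4Instance n m) : Edg n m → Col n m
  | .ru i p _ => .rpar i p
  | .wz i p => .ca i p
  | .zc j q => .ca (Φ.occ (j, q)).1 (Φ.occ (j, q)).2
  | .vz i p => .cb i p
  | .uv i p => .cb i (p - 1)
  | .uz i p => .cc i p
  | .vw i p => .cc i p
  | .uw i p => .cd i p
  | .tri j q => .cd (Φ.occ (j, q)).1 (Φ.occ (j, q)).2

/-- The edge set of `G(Φ)` can be partitioned into the two rainbow
spanning trees `T₁` and `T₂`. -/
def TwoRainbowSpanningTrees {n m : ℕ} (Φ : NAE4Instance n m) (T₁ T₂ : Set (Edg n m)) : Prop :=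
  T₁ ∪ T₂ = Set.univ ∧ Disjoint T₁ T₂ ∧
    IsSpanningTree (ends Φ) T₁ ∧ IsSpanningTree (ends Φ) T₂ ∧
    Rainbow (color Φ) T₁ ∧ Rainbow (color Φ) T₂

/-! ### Auxiliary material for the proof -/

section Generic

variable {V E : Type*}

/-- A generic criterion: if every edge of `T` is the "parent edge" of a unique
non-root vertex (with depths strictly decreasing towards the root), then `T`
is a spanning tree. -/
theorem isSpanningTree_of_parent (ends : E → Sym2 V) (T : Set E)
    (r : V) (P : V → V) (child : E → V) (d : V → ℕ)
    (hch : ∀ e ∈ T, child e ≠ r ∧ ends e = s(P (child e), child e))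
    (hdep : ∀ v, v ≠ r → d (P v) < d v)
    (hsurj : ∀ v, v ≠ r → ∃ e ∈ T, child e = v)
    (hinj : ∀ e ∈ T, ∀ f ∈ T, child e = child f → e = f) :
    IsSpanningTree ends T := by
  have hsymm : Symmetric (Step ends T) := by
    rintro a b ⟨e, he, hq⟩
    exact ⟨e, he, hq.trans (Sym2.eq_swap)⟩
  have toRoot : ∀ v, Relation.ReflTransGen (Step ends T) v r := by
    have key : ∀ k v, d v < k → Relation.ReflTransGen (Step ends T) v r := by
      intro k
      induction k with
      | zero => intro v h; omega
      | succ k ih =>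
        intro v h
        by_cases hv : v = r
        · subst hv; exact .refl
        · obtain ⟨e, heT, hce⟩ := hsurj v hv
          obtain ⟨-, hends⟩ := hch e heT
          rw [hce] at hends
          have step : Step ends T v (P v) := ⟨e, heT, hends.trans Sym2.eq_swap⟩
          exact Relation.ReflTransGen.head step
            (ih (P v) (lt_of_lt_of_le (hdep v hv) (Nat.lt_succ_iff.mp h)))
    intro v; exact key (d v + 1) v (Nat.lt_succ_self _)
  constructor
  · intro a b
    exact (toRoot a).trans (by haveI : Std.Symm (Step ends T) := ⟨fun _ _ h => hsymm h⟩; exact Std.Symm.symm _ _ (toRoot b))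
  · intro e heT hc
    obtain ⟨hxr, hends⟩ := hch e heT
    set x := child e with hx
    -- the "goes up to x" predicate
    set Up : V → V → Prop := fun a b => a ≠ r ∧ b = P a with hUp
    set Desc : V → Prop := fun w => Relation.ReflTransGen Up w x with hDesc
    have descx : Desc x := .refl
    have desc_le : ∀ w, Desc w → d x ≤ d w := by
      intro w hw
      induction hw using Relation.ReflTransGen.head_induction_on with
      | refl => exact le_refl _
      | head h₁ h₂ ih =>
        obtain ⟨har, hbp⟩ := h₁
        subst hbp
        exact le_of_lt (lt_of_le_of_lt ih (hdep _ har))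
    have descPx : ¬ Desc (P x) := by
      intro h
      have := desc_le _ h
      have := hdep x hxr
      omega
    have iffstep : ∀ v, v ≠ r → v ≠ x → (Desc v ↔ Desc (P v)) := by
      intro v hvr hvx
      constructor
      · intro h
        rcases Relation.ReflTransGen.cases_head h with h | ⟨b, ⟨-, hb⟩, h2⟩
        · exact absurd h hvx
        · rwa [hb] at h2
      · intro h
        exact Relation.ReflTransGen.head ⟨hvr, rfl⟩ h
    have pres : ∀ a b, Relation.ReflTransGen (Step ends (T \ {e})) a b →
        (Desc a ↔ Desc b) := by
      intro a b h
      induction h with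
      | refl => rfl
      | tail _ hstep ih =>
        refine ih.trans ?_
        obtain ⟨f, ⟨hfT, hfe⟩, hq⟩ := hstep
        have hfe' : f ≠ e := hfe
        obtain ⟨hcr, hce⟩ := hch f hfT
        have hcx : child f ≠ x := by
          intro hh
          exact hfe' (hinj f hfT e heT (hh.trans hx))
        rw [hce] at hq
        rcases Sym2.eq_iff.mp hq with ⟨h1, h2⟩ | ⟨h1, h2⟩
        · rw [← h1, ← h2]; exact (iffstep _ hcr hcx).symm
        · rw [← h1, ← h2]; exact iffstep _ hcr hcx
    exact descPx ((pres x (P x) (hc x (P x))).mp descx)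

end Generic

section Counting

variable {n m : ℕ}

def vtxEquiv (n m : ℕ) : Vtx n m ≃
    ((Fin n × Fin 4) ⊕ (Fin n × Fin 4) ⊕ (Fin n × Fin 4) ⊕ (Fin n × Fin 4) ⊕
      (Fin m × Fin 3) ⊕ Unit) where
  toFun v :=
    match v with
    | .u i p => .inl (i, p)
    | .v i p => .inr (.inl (i, p))
    | .w i p => .inr (.inr (.inl (i, p)))
    | .z i p => .inr (.inr (.inr (.inl (i, p))))
    | .c j q => .inr (.inr (.inr (.inr (.inl (j, q)))))
    | .r => .inr (.inr (.inr (.inr (.inr ()))))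
  invFun x :=
    match x with
    | .inl (i, p) => .u i p
    | .inr (.inl (i, p)) => .v i p
    | .inr (.inr (.inl (i, p))) => .w i p
    | .inr (.inr (.inr (.inl (i, p)))) => .z i p
    | .inr (.inr (.inr (.inr (.inl (j, q))))) => .c j q
    | .inr (.inr (.inr (.inr (.inr ())))) => .r
  left_inv := by rintro ⟨⟩ <;> rfl
  right_inv := by rintro (⟨i, p⟩ | ⟨i, p⟩ | ⟨i, p⟩ | ⟨i, p⟩ | ⟨j, q⟩ | ⟨⟩) <;> rfl

def edgEquiv (n m : ℕ) : Edg n m ≃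
    ((Fin n × Fin 4) ⊕ (Fin n × Fin 4) ⊕ (Fin n × Fin 4) ⊕ (Fin n × Fin 4) ⊕
      (Fin n × Fin 4) ⊕ (Fin n × Fin 4) ⊕ (Fin m × Fin 3) ⊕ (Fin m × Fin 3) ⊕
      (Fin n × Fin 4 × Fin 2)) where
  toFun e :=
    match e with
    | .uv i p => .inl (i, p)
    | .uw i p => .inr (.inl (i, p))
    | .uz i p => .inr (.inr (.inl (i, p)))
    | .vw i p => .inr (.inr (.inr (.inl (i, p))))
    | .vz i p => .inr (.inr (.inr (.inr (.inl (i, p)))))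
    | .wz i p => .inr (.inr (.inr (.inr (.inr (.inl (i, p))))))
    | .tri j q => .inr (.inr (.inr (.inr (.inr (.inr (.inl (j, q)))))))
    | .zc j q => .inr (.inr (.inr (.inr (.inr (.inr (.inr (.inl (j, q))))))))
    | .ru i p b => .inr (.inr (.inr (.inr (.inr (.inr (.inr (.inr (i, p, b))))))))
  invFun x :=
    match x with
    | .inl (i, p) => .uv i p
    | .inr (.inl (i, p)) => .uw i p
    | .inr (.inr (.inl (i, p))) => .uz i p
    | .inr (.inr (.inr (.inl (i, p)))) => .vw i p
    | .inr (.inr (.inr (.inr (.inl (i, p))))) => .vz i p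
    | .inr (.inr (.inr (.inr (.inr (.inl (i, p)))))) => .wz i p
    | .inr (.inr (.inr (.inr (.inr (.inr (.inl (j, q))))))) => .tri j q
    | .inr (.inr (.inr (.inr (.inr (.inr (.inr (.inl (j, q)))))))) => .zc j q
    | .inr (.inr (.inr (.inr (.inr (.inr (.inr (.inr (i, p, b)))))))) => .ru i p b
  left_inv := by rintro ⟨⟩ <;> rfl
  right_inv := by
    rintro (⟨i, p⟩ | ⟨i, p⟩ | ⟨i, p⟩ | ⟨i, p⟩ | ⟨i, p⟩ | ⟨i, p⟩ | ⟨j, q⟩ | ⟨j, q⟩ |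
      ⟨i, p, b⟩) <;> rfl

end Counting

section Trees

variable {n m : ℕ}

/-- Membership in the first spanning tree. -/
def inT1 : Edg n m → Prop := fun e =>
  match e with
  | .ru _ _ b => b = 0
  | .uv _ _ => True
  | .vw _ _ => True
  | .wz _ _ => True
  | .uw _ _ => False
  | .uz _ _ => False
  | .vz _ _ => False
  | .zc _ q => q ≠ 2
  | .tri _ q => q = 2

/-- Parent map for the first tree. -/
def P1 (Φ : NAE4Instance n m) : Vtx n m → Vtx n m
  | .r => .r
  | .u _ _ => .r
  | .v i p => .u i p
  | .w i p => .v i p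
  | .z i p => .w i p
  | .c j q => if q = 2 then .c j 0 else .z (Φ.occ (j, q)).1 (Φ.occ (j, q)).2

/-- Child map for the first tree. -/
def child1 : Edg n m → Vtx n m
  | .ru i p _ => .u i p
  | .uv i p => .v i p
  | .vw i p => .w i p
  | .wz i p => .z i p
  | .uw i p => .u i p
  | .uz i p => .u i p
  | .vz i p => .u i p
  | .zc j q => .c j q
  | .tri j q => .c j q

/-- Depth for the first tree. -/
def d1 : Vtx n m → ℕ
  | .r => 0
  | .u _ _ => 1
  | .v _ _ => 2
  | .w _ _ => 3
  | .z _ _ => 4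
  | .c _ q => if q = 2 then 6 else 5

/-- Parent map for the second tree. -/
def P2 (Φ : NAE4Instance n m) : Vtx n m → Vtx n m
  | .r => .r
  | .u _ _ => .r
  | .w i p => .u i p
  | .z i p => .u i p
  | .v i p => .z i p
  | .c j q => if q = 2 then .z (Φ.occ (j, q)).1 (Φ.occ (j, q)).2 else .c j (q + 1)

/-- Child map for the second tree. -/
def child2 : Edg n m → Vtx n m
  | .ru i p _ => .u i p
  | .uw i p => .w i p
  | .uz i p => .z i p
  | .vz i p => .v i p
  | .uv i p => .u i p
  | .vw i p => .u i p
  | .wz i p => .u i p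
  | .zc j q => .c j q
  | .tri j q => .c j q

/-- Depth for the second tree. -/
def d2 : Vtx n m → ℕ
  | .r => 0
  | .u _ _ => 1
  | .w _ _ => 2
  | .z _ _ => 2
  | .v _ _ => 3
  | .c _ q => if q = 2 then 3 else if q = 1 then 4 else 5

theorem tree1 (Φ : NAE4Instance n m) : IsSpanningTree (ends Φ) {e | inT1 e} := by
  apply isSpanningTree_of_parent (ends Φ) _ Vtx.r (P1 Φ) child1 d1
  · rintro e he
    match e, he with
    | .ru i p b, he => exact ⟨by simp [child1], rfl⟩
    | .uv i p, _ => exact ⟨by simp [child1], rfl⟩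
    | .vw i p, _ => exact ⟨by simp [child1], rfl⟩
    | .wz i p, _ => exact ⟨by simp [child1], rfl⟩
    | .zc j q, he =>
      refine ⟨by simp [child1], ?_⟩
      have hq : q ≠ 2 := he
      simp [child1, ends, P1, hq]
    | .tri j q, he =>
      have hq : q = (2 : Fin 3) := he
      subst hq
      refine ⟨by simp [child1], ?_⟩
      show ends Φ (.tri j 2) = s(P1 Φ (.c j 2), Vtx.c j 2)
      rw [show P1 Φ (.c j 2) = Vtx.c j 0 from rfl,
        show ends Φ (.tri j 2) = s(Vtx.c j 2, Vtx.c j 0) from rfl, Sym2.eq_swap]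
  · rintro v hv
    match v with
    | .r => exact absurd rfl hv
    | .u i p => simp [P1, d1]
    | .v i p => simp [P1, d1]
    | .w i p => simp [P1, d1]
    | .z i p => simp [P1, d1]
    | .c j q =>
      by_cases hq : q = 2 <;> simp [P1, d1, hq]
  · rintro v hv
    match v with
    | .r => exact absurd rfl hv
    | .u i p => exact ⟨.ru i p 0, rfl, rfl⟩
    | .v i p => exact ⟨.uv i p, trivial, rfl⟩
    | .w i p => exact ⟨.vw i p, trivial, rfl⟩
    | .z i p => exact ⟨.wz i p, trivial, rfl⟩
    | .c j q =>
      by_cases hq : q = 2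
      · exact ⟨.tri j q, hq, rfl⟩
      · exact ⟨.zc j q, hq, rfl⟩
  · rintro e he f hf hcf
    match e, f, he, hf, hcf with
    | .ru i p b, .ru i' p' b', he, hf, hcf =>
      have hb : b = 0 := he
      have hb' : b' = 0 := hf
      simp only [child1, Vtx.u.injEq] at hcf
      rw [hcf.1, hcf.2, hb, hb']
    | .uv _ _, .uv _ _, _, _, hcf =>
      simp only [child1, Vtx.v.injEq] at hcf; rw [hcf.1, hcf.2]
    | .vw _ _, .vw _ _, _, _, hcf =>
      simp only [child1, Vtx.w.injEq] at hcf; rw [hcf.1, hcf.2]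
    | .wz _ _, .wz _ _, _, _, hcf =>
      simp only [child1, Vtx.z.injEq] at hcf; rw [hcf.1, hcf.2]
    | .zc _ _, .zc _ _, _, _, hcf =>
      simp only [child1, Vtx.c.injEq] at hcf; rw [hcf.1, hcf.2]
    | .tri _ _, .tri _ _, _, _, hcf =>
      simp only [child1, Vtx.c.injEq] at hcf; rw [hcf.1, hcf.2]
    | .zc j q, .tri j' q', he, hf, hcf =>
      simp only [child1, Vtx.c.injEq] at hcf
      exact absurd (hcf.2.trans hf) he
    | .tri j q, .zc j' q', he, hf, hcf =>
      simp only [child1, Vtx.c.injEq] at hcf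
      exact absurd (hcf.2.symm.trans he) hf

theorem tree2 (Φ : NAE4Instance n m) :
    IsSpanningTree (ends Φ) {e | ¬ inT1 e} := by
  apply isSpanningTree_of_parent (ends Φ) _ Vtx.r (P2 Φ) child2 d2
  · rintro e he
    match e, he with
    | .ru i p b, he => exact ⟨by simp [child2], rfl⟩
    | .uw i p, _ => exact ⟨by simp [child2], rfl⟩
    | .uz i p, _ => exact ⟨by simp [child2], rfl⟩
    | .vz i p, _ => exact ⟨by simp [child2], Sym2.eq_swap⟩
    | .uv i p, he => exact absurd (trivial : inT1 (.uv (n := n) (m := m) i p)) he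
    | .vw i p, he => exact absurd (trivial : inT1 (.vw (n := n) (m := m) i p)) he
    | .wz i p, he => exact absurd (trivial : inT1 (.wz (n := n) (m := m) i p)) he
    | .zc j q, he =>
      have hq : q = (2 : Fin 3) := by
        by_contra h
        exact he h
      subst hq
      refine ⟨by simp [child2], ?_⟩
      simp [child2, ends, P2]
    | .tri j q, he =>
      have hq : q ≠ (2 : Fin 3) := he
      refine ⟨by simp [child2], ?_⟩
      simp only [child2, ends, P2, if_neg hq]
      rw [Sym2.eq_swap]
  · rintro v hv
    match v with
    | .r => exact absurd rfl hv
    | .u i p => simp [P2, d2]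
    | .v i p => simp [P2, d2]
    | .w i p => simp [P2, d2]
    | .z i p => simp [P2, d2]
    | .c j q =>
      fin_cases q <;> simp [P2, d2]
  · rintro v hv
    match v with
    | .r => exact absurd rfl hv
    | .u i p => exact ⟨.ru i p 1, by simp [inT1], rfl⟩
    | .w i p => exact ⟨.uw i p, by simp [inT1], rfl⟩
    | .z i p => exact ⟨.uz i p, by simp [inT1], rfl⟩
    | .v i p => exact ⟨.vz i p, by simp [inT1], rfl⟩
    | .c j q =>
      by_cases hq : q = 2
      · exact ⟨.zc j q, by simp [inT1, hq], rfl⟩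
      · exact ⟨.tri j q, by simp [inT1, hq], rfl⟩
  · rintro e he f hf hcf
    match e, f, he, hf, hcf with
    | .ru i p b, .ru i' p' b', he, hf, hcf =>
      have hb : b ≠ 0 := he
      have hb' : b' ≠ 0 := hf
      have hb1 : b = 1 := by omega
      have hb1' : b' = 1 := by omega
      simp only [child2, Vtx.u.injEq] at hcf
      rw [hcf.1, hcf.2, hb1, hb1']
    | .uw _ _, .uw _ _, _, _, hcf =>
      simp only [child2, Vtx.w.injEq] at hcf; rw [hcf.1, hcf.2]
    | .uz _ _, .uz _ _, _, _, hcf =>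
      simp only [child2, Vtx.z.injEq] at hcf; rw [hcf.1, hcf.2]
    | .vz _ _, .vz _ _, _, _, hcf =>
      simp only [child2, Vtx.v.injEq] at hcf; rw [hcf.1, hcf.2]
    | .zc _ _, .zc _ _, _, _, hcf =>
      simp only [child2, Vtx.c.injEq] at hcf; rw [hcf.1, hcf.2]
    | .tri _ _, .tri _ _, _, _, hcf =>
      simp only [child2, Vtx.c.injEq] at hcf; rw [hcf.1, hcf.2]
    | .zc j q, .tri j' q', he, hf, hcf =>
      have hq : q = (2 : Fin 3) := by by_contra h; exact he h
      have hq' : q' ≠ (2 : Fin 3) := hf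
      simp only [child2, Vtx.c.injEq] at hcf
      exact absurd (hcf.2.symm.trans hq) hq'
    | .tri j q, .zc j' q', he, hf, hcf =>
      have hq : q ≠ (2 : Fin 3) := he
      have hq' : q' = (2 : Fin 3) := by by_contra h; exact hf h
      simp only [child2, Vtx.c.injEq] at hcf
      exact absurd (hcf.2.trans hq') hq
    | .uv i p, _, he, _, _ => exact absurd (trivial : inT1 (.uv (n := n) (m := m) i p)) he
    | .vw i p, _, he, _, _ => exact absurd (trivial : inT1 (.vw (n := n) (m := m) i p)) he
    | .wz i p, _, he, _, _ => exact absurd (trivial : inT1 (.wz (n := n) (m := m) i p)) he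
    | _, .uv i p, _, hf, _ => exact absurd (trivial : inT1 (.uv (n := n) (m := m) i p)) hf
    | _, .vw i p, _, hf, _ => exact absurd (trivial : inT1 (.vw (n := n) (m := m) i p)) hf
    | _, .wz i p, _, hf, _ => exact absurd (trivial : inT1 (.wz (n := n) (m := m) i p)) hf

end Trees

/-- The graph `G(Φ)` has `16n + 3m + 1` vertices, `32n + 6m` edges,
and its edge set can be partitioned into two spanning trees. -/
theorem card_and_two_spanning_trees {n m : ℕ} (Φ : NAE4Instance n m) :
    Fintype.card (Vtx n m) = 16 * n + 3 * m + 1 ∧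
    Fintype.card (Edg n m) = 32 * n + 6 * m ∧
    ∃ T₁ T₂ : Set (Edg n m), T₁ ∪ T₂ = Set.univ ∧ Disjoint T₁ T₂ ∧
      IsSpanningTree (ends Φ) T₁ ∧ IsSpanningTree (ends Φ) T₂ := by
  refine ⟨?_, ?_, {e | inT1 e}, {e | ¬ inT1 e}, ?_, ?_, tree1 Φ, tree2 Φ⟩
  · rw [Fintype.card_congr (vtxEquiv n m)]
    simp [Fintype.card_sum, Fintype.card_prod]
    ring
  · rw [Fintype.card_congr (edgEquiv n m)]
    simp [Fintype.card_sum, Fintype.card_prod]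
    ring
  · ext e; simp [em]
  · rw [Set.disjoint_iff_inter_eq_empty]
    ext e; simp

end PackingRainbowStmt3
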